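/- Let M be a square integer matrix. Then M is nilpotent if and only if for every prime p, the reduction of the characteristic polynomial of M modulo p has reciprocal polynomial of degree 0. -/
import Mathlib

open Polynomial

theorem stmt_5 {n : ℕ} (M : Matrix (Fin n) (Fin n) ℤ) :
    (∃ k ≥ 1, M ^ k = 0) ↔
      ∀ p : ℕ, p.Prime →
        ((M.charpoly.map (Int.castRingHom (ZMod p))).reverse).natDegree = 0 := by
  have hmonic : M.charpoly.Monic := M.charpoly_monic
  constructor
  · rintro ⟨k, hk, hMk⟩ p hp
    have hnil : IsNilpotent M := ⟨k, hMk⟩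
    have hchar : M.charpoly = X ^ n := by
      have := Matrix.isNilpotent_charpoly_sub_pow_of_isNilpotent hnil
      have h0 : M.charpoly - X ^ Fintype.card (Fin n) = 0 := this.eq_zero
      simpa [Fintype.card_fin, sub_eq_zero] using h0
    rw [hchar]
    rw [Polynomial.map_pow, Polynomial.map_X, ← mul_one ((X : (ZMod p)[X]) ^ n),
      Polynomial.reverse_X_pow_mul]
    simp [Polynomial.reverse]
  · intro h
    have hchar : M.charpoly = X ^ n := by
      have hdeg : M.charpoly.natDegree = n := by
        simpa [Fintype.card_fin] using M.charpoly_natDegree_eq_dim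
      -- show all coefficients below n vanish
      have hcoeff : ∀ i, i ≠ n → M.charpoly.coeff i = 0 := by
        intro i hi
        by_cases hin : i < n
        swap
        · exact Polynomial.coeff_eq_zero_of_natDegree_lt (by omega)
        · -- every prime divides the coefficient
          by_contra hne
          obtain ⟨p, hpgt, hp⟩ := Nat.exists_infinite_primes ((M.charpoly.coeff i).natAbs + 1)
          haveI : Fact p.Prime := ⟨hp⟩
          have hXn : M.charpoly.map (Int.castRingHom (ZMod p)) = X ^ n := by
            have hmp : (M.charpoly.map (Int.castRingHom (ZMod p))).Monic :=
              hmonic.map _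
            have hdp : (M.charpoly.map (Int.castRingHom (ZMod p))).natDegree = n := by
              rw [hmonic.natDegree_map, hdeg]
            have htd := h p hp
            rw [Polynomial.reverse_natDegree] at htd
            have hle := Polynomial.natTrailingDegree_le_natDegree
              (p := M.charpoly.map (Int.castRingHom (ZMod p)))
            have : (M.charpoly.map (Int.castRingHom (ZMod p))).natTrailingDegree
                = (M.charpoly.map (Int.castRingHom (ZMod p))).natDegree := by omega
            have h2 := hmp.eq_X_pow_iff_natTrailingDegree_eq_natDegree.mpr this
            rwa [hdp] at h2
          have hzero : ((M.charpoly.coeff i : ℤ) : ZMod p) = 0 := by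
            have := congrArg (fun q => Polynomial.coeff q i) hXn
            simpa [Polynomial.coeff_map, Polynomial.coeff_X_pow, hi] using this
          have hdvd : (p : ℤ) ∣ M.charpoly.coeff i :=
            (ZMod.intCast_zmod_eq_zero_iff_dvd _ p).mp hzero
          have : (p : ℤ) ≤ |M.charpoly.coeff i| :=
            Int.le_of_dvd (abs_pos.mpr hne) ((dvd_abs _ _).mpr hdvd)
          have : (p : ℤ) ≤ (M.charpoly.coeff i).natAbs := by
            rwa [Int.abs_eq_natAbs] at this
          exact_mod_cast absurd this (by push_cast; omega)
      ext i
      rw [Polynomial.coeff_X_pow]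
      by_cases hi : i = n
      · subst hi
        rw [if_pos rfl]
        have := hmonic.coeff_natDegree
        rwa [hdeg] at this
      · simp [hi, hcoeff i hi]
    rcases Nat.eq_zero_or_pos n with hn | hn
    · subst hn
      exact ⟨1, le_refl 1, Subsingleton.elim _ _⟩
    · refine ⟨n, hn, ?_⟩
      have := M.aeval_self_charpoly
      rwa [hchar, map_pow, aeval_X] at this
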